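/- Let F=(f₁,…,fₙ):ℝⁿ→ℝⁿ be a polynomial map satisfying det DF(x)≠0 for all x∈ℝⁿ, let H(x)=‖F(x)‖₂²/2, and let Y=(−∂H/∂x₁,…,−∂H/∂xₙ). If q∈ℝⁿ satisfies F(q)=0, then the determinant of the Jacobian matrix of Y at q equals (−1)ⁿ·(det DF(q))²; in particular it is nonzero. -/
import Mathlib

open MvPolynomial Filter

noncomputable def evalMap {n : ℕ} (F : Fin n → MvPolynomial (Fin n) ℝ) (x : Fin n → ℝ) :
    Fin n → ℝ := fun i => eval x (F i)

noncomputable def jacDet {n : ℕ} (F : Fin n → MvPolynomial (Fin n) ℝ) (x : Fin n → ℝ) : ℝ :=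
  Matrix.det (Matrix.of fun i j => eval x (pderiv j (F i)))

/-- The polynomial `H = ‖F‖₂²/2 = (f₁² + ⋯ + fₙ²)/2`. -/
noncomputable def polyH {n : ℕ} (F : Fin n → MvPolynomial (Fin n) ℝ) :
    MvPolynomial (Fin n) ℝ :=
  C (1 / 2 : ℝ) * ∑ i, F i ^ 2

/-- The gradient vector field `Y = (-∂H/∂x₁, …, -∂H/∂xₙ)` as a tuple of polynomials. -/
noncomputable def gradField {n : ℕ} (F : Fin n → MvPolynomial (Fin n) ℝ) :
    Fin n → MvPolynomial (Fin n) ℝ :=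
  fun i => - pderiv i (polyH F)

/-- at every zero `q` of `F`, the Jacobian determinant of the gradient
vector field `Y = -∇H` equals `(-1)ⁿ (det DF(q))²`, and in particular is nonzero. -/
theorem stmt10 {n : ℕ} (F : Fin n → MvPolynomial (Fin n) ℝ)
    (hdet : ∀ x : Fin n → ℝ, jacDet F x ≠ 0)
    (q : Fin n → ℝ) (hq : ∀ i, eval q (F i) = 0) :
    Matrix.det (Matrix.of fun i j => eval q (pderiv j (gradField F i)))
        = (-1 : ℝ) ^ n * (jacDet F q) ^ 2 ∧
      Matrix.det (Matrix.of fun i j => eval q (pderiv j (gradField F i))) ≠ 0 := by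
  set A : Matrix (Fin n) (Fin n) ℝ := Matrix.of fun i j => eval q (pderiv j (F i)) with hA
  have key : (Matrix.of fun i j => eval q (pderiv j (gradField F i)))
      = - (A.transpose * A) := by
    ext i j
    simp only [gradField, polyH, map_neg, eval_neg, Matrix.neg_apply, Matrix.mul_apply,
      Matrix.transpose_apply, Matrix.of_apply, hA]
    congr 1
    have h1 : pderiv i (C (1 / 2 : ℝ) * ∑ k, F k ^ 2)
        = ∑ k, F k * pderiv i (F k) := by
      rw [pderiv_C_mul, map_sum]
      rw [Finset.mul_sum]
      refine Finset.sum_congr rfl fun k _ => ?_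
      rw [show F k ^ 2 = F k * F k by ring, pderiv_mul]
      have h2 : (C (1 / 2 : ℝ) : MvPolynomial (Fin n) ℝ) * 2 = 1 := by
        rw [show (2 : MvPolynomial (Fin n) ℝ) = C 2 from (map_ofNat C 2).symm, ← C_mul]
        norm_num
      calc C (1 / 2 : ℝ) * ((pderiv i) (F k) * F k + F k * (pderiv i) (F k))
          = (C (1 / 2 : ℝ) * 2) * (F k * pderiv i (F k)) := by ring
        _ = F k * pderiv i (F k) := by rw [h2, one_mul]
    rw [h1, map_sum, map_sum]
    refine Finset.sum_congr rfl fun k _ => ?_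
    rw [pderiv_mul, map_add, eval_mul, eval_mul, hq k]
    ring
  rw [key, Matrix.det_neg, Matrix.det_mul, Matrix.det_transpose]
  have hAd : A.det = jacDet F q := rfl
  constructor
  · rw [hAd, Fintype.card_fin]; ring
  · rw [hAd]
    have := hdet q
    positivity
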